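/- Let W : Fin n → Fin n → ℝ≥0 have equal integer row and column sums at each index. Then the following are equivalent: (1) every entry of W is an integer; (2) W has no non-integer entry lying on a completely decimal cycle; moreover, every non-integer entry of W lies on some completely decimal cycle, i.e., if W_{i,j} is not an integer then there exist pairwise-distinct α_1,...,α_p and pairwise-distinct β_1,...,β_p with (α_1, β_1) = (i, j) and all entries W_{α_k, β_k}, W_{α_{k+1}, β_k} (α_{p+1} = α_1) non-integers. -/

import Mathlib

open scoped NNReal

def IsIntNN (x : ℝ≥0) : Prop := ∃ m : ℕ, x = (m : ℝ≥0)

/-- There is a completely decimal cycle passing through the entry `(i, j)`. -/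
def DecimalCycleThrough {n : ℕ} (W : Fin n → Fin n → ℝ≥0) (i j : Fin n) : Prop :=
  ∃ (p : ℕ) (α β : Fin (p + 1) → Fin n),
    Function.Injective α ∧ Function.Injective β ∧
    α 0 = i ∧ β 0 = j ∧
    ∀ k : Fin (p + 1),
      ¬ IsIntNN (W (α k) (β k)) ∧ ¬ IsIntNN (W (α (k + 1)) (β k))


lemma IsIntNN.add {x y : ℝ≥0} (hx : IsIntNN x) (hy : IsIntNN y) : IsIntNN (x + y) := by
  obtain ⟨a, rfl⟩ := hx; obtain ⟨b, rfl⟩ := hy; exact ⟨a + b, by push_cast; ring⟩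

lemma isIntNN_sum {ι : Type*} (s : Finset ι) (f : ι → ℝ≥0) (h : ∀ i ∈ s, IsIntNN (f i)) :
    IsIntNN (∑ i ∈ s, f i) := by
  classical
  induction s using Finset.induction with
  | empty => exact ⟨0, by simp⟩
  | @insert x s hx ih =>
    rw [Finset.sum_insert hx]
    exact (h _ (by simp)).add (ih fun i hi => h i (by simp [hi]))

lemma isIntNN_of_eq_add {x y z : ℝ≥0} (hx : IsIntNN x) (hy : IsIntNN y) (h : x = y + z) :
    IsIntNN z := by
  obtain ⟨a, rfl⟩ := hx; obtain ⟨b, rfl⟩ := hy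
  have hba : b ≤ a := by
    have h1 : (b : ℝ≥0) ≤ (a : ℝ≥0) := h ▸ le_self_add
    exact_mod_cast h1
  refine ⟨a - b, ?_⟩
  have h1 : (b : ℝ≥0) + (↑(a - b) : ℝ≥0) = (a : ℝ≥0) := by
    rw [← Nat.cast_add]; congr 1; omega
  exact (add_left_cancel (h1.trans h)).symm


lemma getLeft?_inj {γ δ : Type*} : ∀ (x x' : γ ⊕ δ) (c : γ),
    c ∈ x.getLeft? → c ∈ x'.getLeft? → x = x' := by
  rintro (a | a) (a' | a') c hc hc' <;> simp_all

lemma getRight?_inj {γ δ : Type*} : ∀ (x x' : γ ⊕ δ) (c : δ),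
    c ∈ x.getRight? → c ∈ x'.getRight? → x = x' := by
  rintro (a | a) (a' | a') c hc hc' <;> simp_all



lemma helper_ne_nil {α : Type*} {l : List α} {x : α} (h : l.head? = some x) : l ≠ [] := by
  intro hl; subst hl; simp at h

lemma helper_get_zero {α : Type*} {l : List α} {x : α} (h : l.head? = some x)
    (h0 : 0 < l.length) : l.get ⟨0, h0⟩ = x := by
  cases l with
  | nil => simp at h0
  | cons a t => simp at h; simp [h]

lemma helper_getLast?_cons {α : Type*} {l : List α} (a : α) (h : l ≠ []) :
    (a :: l).getLast? = l.getLast? := by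
  obtain ⟨b, t, rfl⟩ := List.exists_cons_of_ne_nil h
  exact List.getLast?_cons_cons

lemma alt_spec {n : ℕ} (N : Fin n → Fin n → Prop)
    (Adj : (Fin n ⊕ Fin n) → (Fin n ⊕ Fin n) → Prop)
    (hrr : ∀ b b', ¬ Adj (.inr b) (.inr b'))
    (hll : ∀ a a', ¬ Adj (.inl a) (.inl a'))
    (hlr : ∀ a b, Adj (.inl a) (.inr b) → N a b)
    (hrl : ∀ b a, Adj (.inr b) (.inl a) → N a b) :
    ∀ l : List (Fin n ⊕ Fin n), l.Chain' Adj →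
      ∀ aend : Fin n, l.getLast? = some (.inl aend) →
      ((∀ b, l.head? = some (.inr b) →
          (l.filterMap Sum.getLeft?).length = (l.filterMap Sum.getRight?).length ∧
          (l.filterMap Sum.getRight?).head? = some b ∧
          (∀ k (hk : k < (l.filterMap Sum.getLeft?).length)
              (hk' : k < (l.filterMap Sum.getRight?).length),
            N ((l.filterMap Sum.getLeft?).get ⟨k, hk⟩) ((l.filterMap Sum.getRight?).get ⟨k, hk'⟩)) ∧
          (∀ k (hk : k < (l.filterMap Sum.getLeft?).length)
              (hk' : k + 1 < (l.filterMap Sum.getRight?).length),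
            N ((l.filterMap Sum.getLeft?).get ⟨k, hk⟩) ((l.filterMap Sum.getRight?).get ⟨k+1, hk'⟩)) ∧
          (l.filterMap Sum.getLeft?).getLast? = some aend) ∧
       (∀ a₀, l.head? = some (.inl a₀) →
          (l.filterMap Sum.getLeft?).length = (l.filterMap Sum.getRight?).length + 1 ∧
          (l.filterMap Sum.getLeft?).head? = some a₀ ∧
          (∀ k (hk : k < (l.filterMap Sum.getLeft?).length)
              (hk' : k < (l.filterMap Sum.getRight?).length),
            N ((l.filterMap Sum.getLeft?).get ⟨k, hk⟩) ((l.filterMap Sum.getRight?).get ⟨k, hk'⟩)) ∧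
          (∀ k (hk : k + 1 < (l.filterMap Sum.getLeft?).length)
              (hk' : k < (l.filterMap Sum.getRight?).length),
            N ((l.filterMap Sum.getLeft?).get ⟨k+1, hk⟩) ((l.filterMap Sum.getRight?).get ⟨k, hk'⟩)) ∧
          (l.filterMap Sum.getLeft?).getLast? = some aend)) := by
  intro l
  induction l with
  | nil => intro _ aend h; simp at h
  | cons x t ih =>
    intro hc aend hlast
    constructor
    · -- head is inr b
      rintro b hb
      simp only [List.head?_cons, Option.some.injEq] at hb
      subst hb
      match t, hc, hlast with
      | [], _, hlast => simp at hlast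
      | (Sum.inr b') :: t', hc, _ =>
          exact absurd (List.isChain_cons_cons.mp hc).1 (hrr _ _)
      | (Sum.inl a₁) :: t', hc, hlast =>
        have hadj := (List.isChain_cons_cons.mp hc).1
        have hct : List.Chain' Adj (Sum.inl a₁ :: t') := (List.isChain_cons_cons.mp hc).2
        have hlast' : (Sum.inl a₁ :: t').getLast? = some (.inl aend) := by
          rw [← hlast]; symm; exact List.getLast?_cons_cons
        obtain ⟨hlen, hhead, hpair, hshift, hgl⟩ :=
          (ih hct aend hlast').2 a₁ (by simp)
        have hRl : ((Sum.inr b :: Sum.inl a₁ :: t').filterMap Sum.getLeft?)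
            = ((Sum.inl a₁ :: t').filterMap Sum.getLeft?) := by
          simp [List.filterMap_cons, Sum.getLeft?]
        have hCl : ((Sum.inr b :: Sum.inl a₁ :: t').filterMap Sum.getRight?)
            = b :: ((Sum.inl a₁ :: t').filterMap Sum.getRight?) := by
          simp [List.filterMap_cons, Sum.getRight?]
        rw [hRl, hCl]
        refine ⟨by rw [List.length_cons, hlen], by simp, ?_, ?_, hgl⟩
        · intro k hk hk'
          cases k with
          | zero =>
            have e1 := helper_get_zero hhead hk
            have e2 : (b :: (Sum.inl a₁ :: t').filterMap Sum.getRight?).get ⟨0, hk'⟩ = b := rfl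
            rw [e1, e2]
            exact hrl _ _ hadj
          | succ k =>
            rw [List.get_cons_succ]
            exact hshift k hk (by simp only [List.length_cons] at hk'; omega)
        · intro k hk hk'
          rw [List.get_cons_succ]
          exact hpair k hk (by simp only [List.length_cons] at hk'; omega)
    · -- head is inl a₀
      rintro a₀ ha
      simp only [List.head?_cons, Option.some.injEq] at ha
      subst ha
      match t, hc, hlast with
      | [], _, hlast =>
        simp only [List.getLast?_singleton, Option.some.injEq, Sum.inl.injEq] at hlast
        subst hlast
        refine ⟨by simp [List.filterMap_cons, Sum.getLeft?, Sum.getRight?],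
          by simp [List.filterMap_cons, Sum.getLeft?],
          ?_, ?_, by simp [List.filterMap_cons, Sum.getLeft?, Sum.getRight?]⟩
        · intro k hk hk'
          simp only [List.filterMap_cons, Sum.getRight?, List.filterMap_nil,
            List.length_nil] at hk'
          omega
        · intro k hk hk'
          simp only [List.filterMap_cons, Sum.getRight?, List.filterMap_nil,
            List.length_nil] at hk'
          omega
      | (Sum.inl a') :: t', hc, _ =>
          exact absurd (List.isChain_cons_cons.mp hc).1 (hll _ _)
      | (Sum.inr b₁) :: t', hc, hlast =>
        have hadj := (List.isChain_cons_cons.mp hc).1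
        have hct : List.Chain' Adj (Sum.inr b₁ :: t') := (List.isChain_cons_cons.mp hc).2
        have hlast' : (Sum.inr b₁ :: t').getLast? = some (.inl aend) := by
          rw [← hlast]; symm; exact List.getLast?_cons_cons
        obtain ⟨hlen, hhead, hpair, hshift, hgl⟩ :=
          (ih hct aend hlast').1 b₁ (by simp)
        have hRl : ((Sum.inl a₀ :: Sum.inr b₁ :: t').filterMap Sum.getLeft?)
            = a₀ :: ((Sum.inr b₁ :: t').filterMap Sum.getLeft?) := by
          simp [List.filterMap_cons, Sum.getLeft?, Sum.getRight?]
        have hCl : ((Sum.inl a₀ :: Sum.inr b₁ :: t').filterMap Sum.getRight?)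
            = ((Sum.inr b₁ :: t').filterMap Sum.getRight?) := by
          simp [List.filterMap_cons, Sum.getLeft?, Sum.getRight?]
        rw [hRl, hCl]
        have hCne : ((Sum.inr b₁ :: t').filterMap Sum.getRight?) ≠ [] := helper_ne_nil hhead
        have hRne : ((Sum.inr b₁ :: t').filterMap Sum.getLeft?) ≠ [] := by
          intro h
          rw [h] at hlen
          exact hCne (List.length_eq_zero_iff.mp hlen.symm)
        refine ⟨by rw [List.length_cons, hlen], by simp, ?_, ?_, ?_⟩
        · intro k hk hk'
          cases k with
          | zero =>
            have e1 : (a₀ :: (Sum.inr b₁ :: t').filterMap Sum.getLeft?).get ⟨0, hk⟩ = a₀ := rfl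
            have e2 := helper_get_zero hhead hk'
            rw [e1, e2]
            exact hlr _ _ hadj
          | succ k =>
            rw [List.get_cons_succ]
            exact hshift k (by simp only [List.length_cons] at hk; omega) hk'
        · intro k hk hk'
          rw [List.get_cons_succ]
          exact hpair k (by simp only [List.length_cons] at hk; omega) hk'
        · rw [helper_getLast?_cons _ hRne]
          exact hgl

set_option maxHeartbeats 1000000 in
theorem decimal_cycle_exists {n : ℕ} (W : Fin n → Fin n → ℝ≥0)
    (hbal : ∀ i, ∑ j, W i j = ∑ k, W k i)
    (hint : ∀ i, ∃ m : ℕ, ∑ j, W i j = (m : ℝ≥0)) :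
    ∀ i j, ¬ IsIntNN (W i j) → DecimalCycleThrough W i j := by
  classical
  intro i j hij
  set G : SimpleGraph (Fin n ⊕ Fin n) :=
    { Adj := fun u v => ∃ a b, ¬ IsIntNN (W a b) ∧ ¬ (a = i ∧ b = j) ∧
        ((u = .inl a ∧ v = .inr b) ∨ (u = .inr b ∧ v = .inl a))
      symm := ⟨by
        rintro u v ⟨a, b, h1, h2, (⟨rfl, rfl⟩ | ⟨rfl, rfl⟩)⟩ <;>
          exact ⟨a, b, h1, h2, by tauto⟩⟩
      loopless := ⟨by
        rintro u ⟨a, b, h1, h2, (⟨rfl, h⟩ | ⟨rfl, h⟩)⟩ <;> simp at h⟩ } with hG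
  have hrr : ∀ b b', ¬ G.Adj (.inr b) (.inr b') := by
    rintro b b' ⟨a, c, h1, h2, (⟨h, -⟩ | ⟨-, h⟩)⟩ <;> simp at h
  have hll : ∀ a a', ¬ G.Adj (.inl a) (.inl a') := by
    rintro a a' ⟨c, d, h1, h2, (⟨-, h⟩ | ⟨h, -⟩)⟩ <;> simp at h
  have hlr : ∀ a b, G.Adj (.inl a) (.inr b) → ¬ IsIntNN (W a b) := by
    rintro a b ⟨c, d, h1, h2, (⟨hu, hv⟩ | ⟨hu, hv⟩)⟩ <;> simp_all
  have hrl : ∀ b a, G.Adj (.inr b) (.inl a) → ¬ IsIntNN (W a b) := by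
    rintro b a ⟨c, d, h1, h2, (⟨hu, hv⟩ | ⟨hu, hv⟩)⟩ <;> simp_all
  have hadj_of : ∀ a b, ¬ IsIntNN (W a b) → ¬ (a = i ∧ b = j) → G.Adj (.inl a) (.inr b) :=
    fun a b h1 h2 => ⟨a, b, h1, h2, Or.inl ⟨rfl, rfl⟩⟩
  clear hG
  by_cases hreach : G.Reachable (Sum.inr j) (Sum.inl i)
  · -- build the cycle
    obtain ⟨w⟩ := hreach
    obtain ⟨pw, hp⟩ := w.toPath
    have hchain : List.Chain' G.Adj pw.support := pw.isChain_adj_support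
    have hhead : pw.support.head? = some (Sum.inr j) := by
      rw [pw.support_eq_cons]; rfl
    have hsupne : pw.support ≠ [] := pw.support_ne_nil
    have hlastsup : pw.support.getLast? = some (Sum.inl i) := by
      rw [List.getLast?_eq_getLast hsupne, pw.getLast_support]
    obtain ⟨hlen, hhC, hpair, hshift, hgl⟩ :=
      (alt_spec (fun a b => ¬ IsIntNN (W a b)) G.Adj hrr hll hlr hrl
        pw.support hchain i hlastsup).1 j hhead
    set R := pw.support.filterMap Sum.getLeft? with hRdef
    set C := pw.support.filterMap Sum.getRight? with hCdef
    have hnodup : pw.support.Nodup := hp.support_nodup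
    have hnodupR : R.Nodup := hnodup.filterMap getLeft?_inj
    have hnodupC : C.Nodup := hnodup.filterMap getRight?_inj
    have hCne : C ≠ [] := helper_ne_nil hhC
    have hRne : R ≠ [] := by
      intro h; rw [h] at hlen; exact hCne (List.length_eq_zero_iff.mp hlen.symm)
    have hm1 : 1 ≤ R.length := List.length_pos_iff.mpr hRne
    have hRlast : R.getLast hRne = i := by
      rw [List.getLast?_eq_getLast hRne] at hgl
      exact Option.some.inj hgl
    set Lα := R.getLast hRne :: R.dropLast with hLdef
    have hLlen : Lα.length = R.length := by
      simp only [hLdef, List.length_cons, List.length_dropLast]; omega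
    have hnodupL : Lα.Nodup := by
      have h1 : (R.dropLast ++ [R.getLast hRne]).Nodup := by
        rw [List.dropLast_append_getLast]; exact hnodupR
      exact (List.perm_append_singleton _ _).nodup h1
    -- index lemmas
    have hLget : ∀ (t : ℕ) (h1 : t + 1 < Lα.length) (h2 : t < R.length),
        Lα.get ⟨t + 1, h1⟩ = R.get ⟨t, h2⟩ := by
      intro t h1 h2
      simp only [hLdef, List.get_eq_getElem, List.getElem_cons_succ, List.getElem_dropLast]
    have hL0 : ∀ (h1 : 0 < Lα.length), Lα.get ⟨0, h1⟩ = i := fun _ => hRlast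
    have hRlast_get : ∀ (h2 : R.length - 1 < R.length),
        R.get ⟨R.length - 1, h2⟩ = i := by
      intro h2
      rw [← hRlast, List.getLast_eq_getElem, List.get_eq_getElem]
    refine ⟨R.length - 1,
      (fun k => Lα.get (Fin.cast (by omega) k)),
      (fun k => C.get (Fin.cast (by omega : R.length - 1 + 1 = C.length) k)),
      ?_, ?_, ?_, ?_, ?_⟩
    · exact (List.nodup_iff_injective_get.mp hnodupL).comp (Fin.cast_injective _)
    · exact (List.nodup_iff_injective_get.mp hnodupC).comp (Fin.cast_injective _)
    · exact hL0 _
    · exact helper_get_zero hhC _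
    · intro k
      obtain ⟨t, ht⟩ := k
      have htR : t < R.length := by omega
      constructor
      · -- N (α k) (β k)
        show ¬ IsIntNN (W (Lα.get ⟨t, _⟩) (C.get ⟨t, _⟩))
        cases t with
        | zero =>
          rw [hL0, helper_get_zero hhC]
          exact hij
        | succ s =>
          rw [hLget s (by omega) (by omega)]
          exact hshift s (by omega) (by omega)
      · -- N (α (k+1)) (β k)
        have hval : ((⟨t, ht⟩ + 1 : Fin (R.length - 1 + 1)) : ℕ)
            = (t + 1) % (R.length - 1 + 1) := by
          rw [Fin.add_def]
          simp [Fin.val_one', Nat.add_mod_mod]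
        show ¬ IsIntNN (W (Lα.get (Fin.cast _ (⟨t, ht⟩ + 1))) (C.get ⟨t, _⟩))
        have hkey : Lα.get (Fin.cast (by omega) (⟨t, ht⟩ + 1 : Fin (R.length - 1 + 1)))
            = R.get ⟨t, htR⟩ := by
          rcases eq_or_ne t (R.length - 1) with h | h
          · have hc : ((Fin.cast (by omega) (⟨t, ht⟩ + 1 : Fin (R.length - 1 + 1))) : Fin Lα.length)
                = ⟨0, by omega⟩ := by
              apply Fin.ext
              simp only [Fin.coe_cast]
              rw [hval, h, Nat.mod_self]
            rw [hc, hL0 (by omega)]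
            subst h
            exact (hRlast_get htR).symm
          · have hc : ((Fin.cast (by omega) (⟨t, ht⟩ + 1 : Fin (R.length - 1 + 1))) : Fin Lα.length)
                = ⟨t + 1, by omega⟩ := by
              apply Fin.ext
              simp only [Fin.coe_cast, hval,
                Nat.mod_eq_of_lt (show t + 1 < R.length - 1 + 1 by omega)]
            rw [hc, hLget t (by omega) htR]
        rw [hkey]
        exact hpair t htR (by omega)
  · -- mass argument: contradiction
    exfalso
    apply hij
    set S : Finset (Fin n) :=
      Finset.univ.filter (fun a => G.Reachable (Sum.inr j) (Sum.inl a)) with hSdef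
    set T : Finset (Fin n) :=
      Finset.univ.filter (fun b => G.Reachable (Sum.inr j) (Sum.inr b)) with hTdef
    have hjT : j ∈ T := Finset.mem_filter.mpr ⟨Finset.mem_univ _, SimpleGraph.Reachable.refl _⟩
    have hiS : i ∉ S := fun h => hreach (Finset.mem_filter.mp h).2
    have c1 : ∀ a ∈ S, ∀ b, ¬ IsIntNN (W a b) → b ∈ T := by
      intro a ha b hN
      have ha' := (Finset.mem_filter.mp ha).2
      have hai : a ≠ i := by rintro rfl; exact hreach ha'
      have hadj : G.Adj (.inl a) (.inr b) := hadj_of a b hN (by tauto)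
      exact Finset.mem_filter.mpr ⟨Finset.mem_univ _, ha'.trans hadj.reachable⟩
    have c2 : ∀ b ∈ T, ∀ a, ¬ IsIntNN (W a b) → ¬ (a = i ∧ b = j) → a ∈ S := by
      intro b hb a hN hne
      have hb' := (Finset.mem_filter.mp hb).2
      have hadj : G.Adj (.inr b) (.inl a) := (hadj_of a b hN hne).symm
      exact Finset.mem_filter.mpr ⟨Finset.mem_univ _, hb'.trans hadj.reachable⟩
    have hcol : ∀ b, IsIntNN (∑ a, W a b) := by
      intro b
      obtain ⟨m, hm⟩ := hint b
      exact ⟨m, by rw [← hbal b]; exact hm⟩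
    have hA : IsIntNN (∑ b ∈ T, ∑ a, W a b) := isIntNN_sum _ _ (fun b _ => hcol b)
    have hB : IsIntNN (∑ a ∈ S, ∑ b, W a b) := isIntNN_sum _ _ (fun a _ => hint a)
    have hAsplit : (∑ b ∈ T, ∑ a, W a b)
        = (∑ b ∈ T, ∑ a ∈ S, W a b) + ∑ b ∈ T, ∑ a ∈ Sᶜ, W a b := by
      calc ∑ b ∈ T, ∑ a, W a b
          = ∑ b ∈ T, (∑ a ∈ S, W a b + ∑ a ∈ Sᶜ, W a b) :=
            Finset.sum_congr rfl fun b _ => (Finset.sum_add_sum_compl S _).symm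
        _ = _ := Finset.sum_add_distrib
    have hBsplit : (∑ a ∈ S, ∑ b, W a b)
        = (∑ b ∈ T, ∑ a ∈ S, W a b) + ∑ a ∈ S, ∑ b ∈ Tᶜ, W a b := by
      calc ∑ a ∈ S, ∑ b, W a b
          = ∑ a ∈ S, (∑ b ∈ T, W a b + ∑ b ∈ Tᶜ, W a b) :=
            Finset.sum_congr rfl fun a _ => (Finset.sum_add_sum_compl T _).symm
        _ = ∑ a ∈ S, ∑ b ∈ T, W a b + ∑ a ∈ S, ∑ b ∈ Tᶜ, W a b := Finset.sum_add_distrib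
        _ = _ := by rw [Finset.sum_comm (s := S) (t := T)]
    have hE : IsIntNN (∑ a ∈ S, ∑ b ∈ Tᶜ, W a b) := by
      apply isIntNN_sum
      intro a ha
      apply isIntNN_sum
      intro b hb
      by_contra hN
      exact (Finset.mem_compl.mp hb) (c1 a ha b hN)
    have hji : (j, i) ∈ T ×ˢ Sᶜ := Finset.mem_product.mpr ⟨hjT, Finset.mem_compl.mpr hiS⟩
    have hDsplit : (∑ b ∈ T, ∑ a ∈ Sᶜ, W a b)
        = (∑ x ∈ (T ×ˢ Sᶜ).erase (j, i), W x.2 x.1) + W i j := by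
      have hprod : ∑ x ∈ T ×ˢ Sᶜ, W x.2 x.1 = ∑ b ∈ T, ∑ a ∈ Sᶜ, W a b :=
        Finset.sum_product T Sᶜ (fun x => W x.2 x.1)
      rw [← hprod]
      exact (Finset.sum_erase_add _ _ hji).symm
    have hD' : IsIntNN (∑ x ∈ (T ×ˢ Sᶜ).erase (j, i), W x.2 x.1) := by
      apply isIntNN_sum
      rintro ⟨b, a⟩ hx
      rw [Finset.mem_erase, Finset.mem_product] at hx
      obtain ⟨hne, hbT, haS⟩ := hx
      by_contra hN
      rcases Classical.em (a = i ∧ b = j) with ⟨rfl, rfl⟩ | h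
      · exact hne rfl
      · exact (Finset.mem_compl.mp haS) (c2 b hbT a hN h)
    have key : (∑ b ∈ T, ∑ a, W a b) + (∑ a ∈ S, ∑ b ∈ Tᶜ, W a b)
        = ((∑ a ∈ S, ∑ b, W a b) + (∑ x ∈ (T ×ˢ Sᶜ).erase (j, i), W x.2 x.1)) + W i j := by
      rw [hAsplit, hBsplit, hDsplit]; ring
    exact isIntNN_of_eq_add (hA.add hE) (hB.add hD') key

theorem integer_iff_no_decimal_entry_on_cycle {n : ℕ} (W : Fin n → Fin n → ℝ≥0)
    (hbal : ∀ i, ∑ j, W i j = ∑ k, W k i)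
    (hint : ∀ i, ∃ m : ℕ, ∑ j, W i j = (m : ℝ≥0)) :
    ((∀ i j, IsIntNN (W i j)) ↔
      ¬ ∃ i j, ¬ IsIntNN (W i j) ∧ DecimalCycleThrough W i j) ∧
    (∀ i j, ¬ IsIntNN (W i j) → DecimalCycleThrough W i j) := by
  have main := decimal_cycle_exists W hbal hint
  refine ⟨⟨fun hall h => ?_, fun h i j => ?_⟩, main⟩
  · obtain ⟨i, j, hij, -⟩ := h
    exact hij (hall i j)
  · by_contra hij
    exact h ⟨i, j, hij, main i j hij⟩
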